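/- For any orthonormal vectors v₁, …, v_{2n} ∈ V (so that ξ = v₁ ∧ ⋯ ∧ v_{2n} is a decomposable unit 2n-vector), one has (ξ_{1,1,…,1} + ξ_{2,2,…,2})² ≤ 1, where ξ_{1,…,1} and ξ_{2,…,2} are the Plücker coordinates with all row indices equal to 1, respectively all equal to 2. -/

import Mathlib

open scoped Matrix

lemma aux_eigen_le_one {m : ℕ} {P : Matrix (Fin m) (Fin m) ℝ}
    (hP : P.PosSemidef) (hQ : (1 - P).PosSemidef) (i : Fin m) :
    hP.1.eigenvalues i ≤ 1 := by
  have hq := hQ.re_dotProduct_nonneg ⇑(hP.1.eigenvectorBasis i)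
  have hnorm : dotProduct (star ⇑(hP.1.eigenvectorBasis i)) ⇑(hP.1.eigenvectorBasis i)
      = 1 := by
    have h1 : (inner ℝ (hP.1.eigenvectorBasis i) (hP.1.eigenvectorBasis i) : ℝ) = 1 := by
      have h2 := hP.1.eigenvectorBasis.orthonormal.1 i
      rw [real_inner_self_eq_norm_sq, h2]; norm_num
    rw [EuclideanSpace.inner_eq_star_dotProduct] at h1
    rw [dotProduct_comm]; exact h1
  rw [Matrix.sub_mulVec, Matrix.one_mulVec, dotProduct_sub, map_sub] at hq
  have he := hP.1.eigenvalues_eq i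
  simp only [hnorm, RCLike.re_to_real] at hq he ⊢
  linarith

lemma aux_det_one_sub {m : ℕ} {P : Matrix (Fin m) (Fin m) ℝ} (hP : P.IsHermitian) :
    (1 - P).det = ∏ i, (1 - hP.eigenvalues i) := by
  have hU : (hP.eigenvectorUnitary : Matrix (Fin m) (Fin m) ℝ) *
      star (hP.eigenvectorUnitary : Matrix (Fin m) (Fin m) ℝ) = 1 :=
    Matrix.mem_unitaryGroup_iff.mp hP.eigenvectorUnitary.2
  have key : (1 : Matrix (Fin m) (Fin m) ℝ) - P =
      (hP.eigenvectorUnitary : Matrix (Fin m) (Fin m) ℝ) *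
        (1 - Matrix.diagonal (RCLike.ofReal ∘ hP.eigenvalues)) *
        star (hP.eigenvectorUnitary : Matrix (Fin m) (Fin m) ℝ) := by
    rw [Matrix.mul_sub, Matrix.sub_mul, mul_one, hU, ← Unitary.conjStarAlgAut_apply (S := ℝ), ← hP.spectral_theorem]
  rw [key, Matrix.det_mul, Matrix.det_mul, mul_right_comm, ← Matrix.det_mul, hU,
    Matrix.det_one, one_mul]
  rw [show (1 : Matrix (Fin m) (Fin m) ℝ) = Matrix.diagonal (fun _ => 1) from
    (Matrix.diagonal_one).symm, Matrix.diagonal_sub, Matrix.det_diagonal]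
  simp

lemma aux_prod_le {m : ℕ} (μ : Fin m → ℝ) (h0 : ∀ i, 0 ≤ μ i) (h1 : ∀ i, μ i ≤ 1)
    (i0 i1 : Fin m) (hne : i0 ≠ i1) : ∏ i, μ i ≤ μ i0 * μ i1 := by
  classical
  rw [← Finset.mul_prod_erase Finset.univ μ (Finset.mem_univ i0)]
  have hi1 : i1 ∈ Finset.univ.erase i0 := Finset.mem_erase.mpr ⟨hne.symm, Finset.mem_univ i1⟩
  rw [← Finset.mul_prod_erase _ μ hi1, ← mul_assoc]
  have hle : ∏ i ∈ ((Finset.univ.erase i0).erase i1), μ i ≤ 1 :=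
    Finset.prod_le_one (fun i _ => h0 i) (fun i _ => h1 i)
  have hnn : 0 ≤ μ i0 * μ i1 := mul_nonneg (h0 i0) (h0 i1)
  nlinarith

/- STATEMENT 12: For orthonormal `v₁,…,v_{2n}` in `V = Fin 2 → Fin (2n) → ℝ` (so that
`ξ = v₁∧⋯∧v_{2n}` is a decomposable unit 2n-vector), the Plücker coordinates satisfy
`(ξ_{1,…,1} + ξ_{2,…,2})² ≤ 1`. -/

/-- Plücker coordinate `ξ_{i₁,…,i_{2n}} := det M`, `M_{ab} = (v_b)_{i_a, a}`. -/
noncomputable def xi (n : ℕ) (v : Fin (2 * n) → (Fin 2 → Fin (2 * n) → ℝ))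
    (i : Fin (2 * n) → Fin 2) : ℝ :=
  Matrix.det (Matrix.of fun a b => v b (i a) a)

theorem stmt_12 (n : ℕ) (hn : 1 ≤ n) (v : Fin (2 * n) → (Fin 2 → Fin (2 * n) → ℝ))
    (hv : ∀ a b, (∑ i : Fin 2, ∑ k : Fin (2 * n), v a i k * v b i k) = if a = b then 1 else 0) :
    (xi n v (fun _ => 0) + xi n v (fun _ => 1)) ^ 2 ≤ 1 := by
  set A : Matrix (Fin (2 * n)) (Fin (2 * n)) ℝ := Matrix.of fun a b => v b 0 a with hAdef
  set B : Matrix (Fin (2 * n)) (Fin (2 * n)) ℝ := Matrix.of fun a b => v b 1 a with hBdef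
  have key : Aᴴ * A + Bᴴ * B = 1 := by
    ext a b
    have hab := hv a b
    rw [Fin.sum_univ_two] at hab
    simp only [Matrix.add_apply, Matrix.mul_apply, Matrix.conjTranspose_apply,
      Matrix.one_apply, hAdef, hBdef, Matrix.of_apply, star_trivial]
    rw [← hab]
  set P := Aᴴ * A with hPdef
  have hPps : P.PosSemidef := Matrix.posSemidef_conjTranspose_mul_self A
  have hQeq : (1 : Matrix (Fin (2 * n)) (Fin (2 * n)) ℝ) - P = Bᴴ * B := by
    rw [← key, add_sub_cancel_left]
  have hQps : ((1 : Matrix (Fin (2 * n)) (Fin (2 * n)) ℝ) - P).PosSemidef := by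
    rw [hQeq]; exact Matrix.posSemidef_conjTranspose_mul_self B
  set μ := hPps.1.eigenvalues with hμdef
  have h0 : ∀ i, 0 ≤ μ i := hPps.eigenvalues_nonneg
  have h1 : ∀ i, μ i ≤ 1 := aux_eigen_le_one hPps hQps
  have hdetP : P.det = ∏ i, μ i := by
    have := hPps.1.det_eq_prod_eigenvalues
    simpa using this
  have hdetQ : ((1 : Matrix (Fin (2 * n)) (Fin (2 * n)) ℝ) - P).det = ∏ i, (1 - μ i) :=
    aux_det_one_sub hPps.1
  have hdA : A.det ^ 2 = P.det := by
    rw [hPdef, Matrix.det_mul, Matrix.det_conjTranspose, star_trivial, sq]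
  have hdB : B.det ^ 2 = ((1 : Matrix (Fin (2 * n)) (Fin (2 * n)) ℝ) - P).det := by
    rw [hQeq, Matrix.det_mul, Matrix.det_conjTranspose, star_trivial, sq]
  set i0 : Fin (2 * n) := ⟨0, by omega⟩
  set i1 : Fin (2 * n) := ⟨1, by omega⟩
  have hne : i0 ≠ i1 := by simp [i0, i1, Fin.ext_iff]
  have hx2 : A.det ^ 2 ≤ μ i0 * μ i1 := by
    rw [hdA, hdetP]; exact aux_prod_le μ h0 h1 i0 i1 hne
  have hy2 : B.det ^ 2 ≤ (1 - μ i0) * (1 - μ i1) := by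
    rw [hdB, hdetQ]
    exact aux_prod_le (fun i => 1 - μ i) (fun i => show (0:ℝ) ≤ 1 - μ i by linarith [h1 i])
      (fun i => show (1:ℝ) - μ i ≤ 1 by linarith [h0 i]) i0 i1 hne
  have hxi0 : xi n v (fun _ => 0) = A.det := rfl
  have hxi1 : xi n v (fun _ => 1) = B.det := rfl
  rw [hxi0, hxi1]
  set x := A.det
  set y := B.det
  set a := μ i0
  set b := μ i1
  have ha0 : 0 ≤ a := h0 i0
  have ha1 : a ≤ 1 := h1 i0
  have hb0 : 0 ≤ b := h0 i1
  have hb1 : b ≤ 1 := h1 i1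
  have hxy2 : (x * y) ^ 2 ≤ (a * b) * ((1 - a) * (1 - b)) := by
    calc (x * y) ^ 2 = x ^ 2 * y ^ 2 := by ring
    _ ≤ (a * b) * ((1 - a) * (1 - b)) := by
        apply mul_le_mul hx2 hy2 (sq_nonneg y)
        exact mul_nonneg ha0 hb0
  have hS : 0 ≤ a * (1 - b) + b * (1 - a) := by nlinarith
  have h2xy : 2 * (x * y) ≤ a * (1 - b) + b * (1 - a) := by
    nlinarith [sq_nonneg (a * (1 - b) - b * (1 - a)), sq_nonneg (2 * (x * y) + (a * (1 - b) + b * (1 - a)))]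
  nlinarith [hx2, hy2, h2xy]
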